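/- Groundness dependencies are sound under the Pos-style abstraction: if in a definite program every unification X = f(Y₁,...,Y_N) with f a program function symbol is abstracted by the Boolean constraint X ↔ (Y₁ ∧ ... ∧ Y_N), and every call evar(X) or enonground(X) by X ↔ False, then any Boolean model of the abstracted program is a safe approximation of groundness: whenever the model forces an argument's Boolean variable to True in an atom of the (concrete) success set, the corresponding argument term contains only program function symbols. -/

import Mathlib

set_option autoImplicit false

namespace Flounder

/-- First-order terms over function symbols `F`, with natural-number variables. -/
inductive Trm (F : Type) : Type
  | var : ℕ → Trm F
  | app : F → List (Trm F) → Trm F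

/-- Substitutions map variables to terms. -/
abbrev Subst (F : Type) := ℕ → Trm F

/-- Applying a substitution to a term. -/
def Trm.subst {F : Type} (θ : Subst F) : Trm F → Trm F
  | .var v => θ v
  | .app f ts => .app f (ts.attach.map (fun t => Trm.subst θ t.1))
  decreasing_by
    have := List.sizeOf_lt_of_mem t.2
    simp only [Trm.app.sizeOf_spec] at *
    omega

/-- Composition of substitutions. -/
def Subst.comp {F : Type} (θ σ : Subst F) : Subst F := fun v => (θ v).subst σ

/-- The variable `v` occurs in the term. -/
inductive Trm.HasVar {F : Type} (v : ℕ) : Trm F → Prop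
  | var : Trm.HasVar v (.var v)
  | app {f : F} {ts : List (Trm F)} {t : Trm F} :
      t ∈ ts → Trm.HasVar v t → Trm.HasVar v (.app f ts)

/-- The function symbol `f` occurs in the term. -/
inductive Trm.HasFunc {F : Type} (f : F) : Trm F → Prop
  | head {ts : List (Trm F)} : Trm.HasFunc f (.app f ts)
  | arg {g : F} {ts : List (Trm F)} {t : Trm F} :
      t ∈ ts → Trm.HasFunc f t → Trm.HasFunc f (.app g ts)

def Trm.Ground {F : Type} (t : Trm F) : Prop := ∀ v, ¬ t.HasVar v

/-- All function symbols of the term belong to `Fp` (a "program term"). -/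
def Trm.OnlyFuncs {F : Type} (Fp : Set F) (t : Trm F) : Prop := ∀ f, t.HasFunc f → f ∈ Fp

/-- The principal function symbol is extraneous (an "encoded variable"). -/
def EVarT {F : Type} (Fp : Set F) : Trm F → Prop
  | .var _ => False
  | .app f _ => f ∉ Fp

/-- The term contains an extraneous function symbol (an "encoded non-ground term"). -/
def ENongroundT {F : Type} (Fp : Set F) (t : Trm F) : Prop := ∃ f, t.HasFunc f ∧ f ∉ Fp

/-- A renaming substitution: variables mapped injectively to variables. -/
def IsRenaming {F : Type} (ρ : Subst F) : Prop :=
  ∃ r : ℕ → ℕ, Function.Injective r ∧ ∀ v, ρ v = Trm.var (r v)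

/-- Atoms: a predicate symbol applied to a list of terms. -/
structure Atom (P F : Type) where
  pred : P
  args : List (Trm F)

def Atom.subst {P F : Type} (θ : Subst F) (A : Atom P F) : Atom P F :=
  ⟨A.pred, A.args.map (Trm.subst θ)⟩

def Atom.HasVar {P F : Type} (A : Atom P F) (v : ℕ) : Prop := ∃ t ∈ A.args, t.HasVar v
def Atom.Ground {P F : Type} (A : Atom P F) : Prop := ∀ v, ¬ A.HasVar v
def Atom.OnlyFuncs {P F : Type} (Fp : Set F) (A : Atom P F) : Prop :=
  ∀ t ∈ A.args, t.OnlyFuncs Fp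

/-- `B` is an instance of `A`. -/
def Atom.Instance {P F : Type} (A B : Atom P F) : Prop := ∃ σ : Subst F, B = A.subst σ
def Atom.Variant {P F : Type} (A B : Atom P F) : Prop := A.Instance B ∧ B.Instance A

def UnifiesA {P F : Type} (θ : Subst F) (A B : Atom P F) : Prop := A.subst θ = B.subst θ
/-- Most general unifier of two atoms: a unifier through which every unifier factors. -/
def IsMGUA {P F : Type} (θ : Subst F) (A B : Atom P F) : Prop :=
  UnifiesA θ A B ∧ ∀ η, UnifiesA η A B → ∃ σ, η = θ.comp σ

/-- Definite clauses. -/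
structure Clause (P F : Type) where
  head : Atom P F
  body : List (Atom P F)

def Clause.subst {P F : Type} (θ : Subst F) (c : Clause P F) : Clause P F :=
  ⟨c.head.subst θ, c.body.map (Atom.subst θ)⟩
def Clause.HasVar {P F : Type} (c : Clause P F) (v : ℕ) : Prop :=
  c.head.HasVar v ∨ ∃ B ∈ c.body, B.HasVar v
def Clause.Ground {P F : Type} (c : Clause P F) : Prop :=
  c.head.Ground ∧ ∀ B ∈ c.body, B.Ground
def Clause.OnlyFuncs {P F : Type} (Fp : Set F) (c : Clause P F) : Prop :=
  c.head.OnlyFuncs Fp ∧ ∀ B ∈ c.body, B.OnlyFuncs Fp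

/-- Annotations record the list of (clause, body position) pairs by which an atom was
introduced; `none` marks the top-level goal ("clause 0"). -/
abbrev Ann (P F : Type) := List (Option (Clause P F) × ℕ)

/-- Annotated goals. -/
abbrev AGoal (P F : Type) := List (Atom P F × Ann P F)

def initGoal {P F : Type} (G : List (Atom P F)) : AGoal P F :=
  (G.zipIdx.map Prod.swap).map fun p => (p.2, [(none, p.1 + 1)])

def AGoal.HasVar {P F : Type} (g : AGoal P F) (v : ℕ) : Prop := ∃ a ∈ g, a.1.HasVar v
def AGoal.inst {P F : Type} (θ : Subst F) (g : AGoal P F) : AGoal P F :=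
  g.map fun a => (a.1.subst θ, a.2)

/-- The annotated body of a clause variant `c` (with original clause `c₀`), inserted
in place of a selected atom with annotation `ann`. -/
def annBody {P F : Type} (c c₀ : Clause P F) (ann : Ann P F) : AGoal P F :=
  (c.body.zipIdx.map Prod.swap).map fun p => (p.2, (some c₀, p.1 + 1) :: ann)

/-- SLD(F) derivations of length `n` from goal `g0` with program `prog`, where only
atoms in the callable set `C` may be selected (SLD resolution: `C = Set.univ`).
`raw i` is the `i`-th goal with atoms as introduced (not yet instantiated), and
`sub i` is the composition of the mgus of the first `i` steps; the actual `i`-th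
resolvent is `raw i` instantiated by `sub i`.  Clause variants are renamed apart. -/
structure Derivation (P F : Type) (prog : Set (Clause P F)) (C : Set (Atom P F))
    (g0 : AGoal P F) (n : ℕ) where
  raw : ℕ → AGoal P F
  sub : ℕ → Subst F
  orig : ℕ → Clause P F
  cl : ℕ → Clause P F
  mgu : ℕ → Subst F
  selAtom : ℕ → Atom P F
  selAnn : ℕ → Ann P F
  hraw0 : raw 0 = g0
  hsub0 : sub 0 = fun v => Trm.var v
  horig : ∀ i < n, orig i ∈ prog
  hvariant : ∀ i < n, ∃ ρ, IsRenaming ρ ∧ cl i = (orig i).subst ρ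
  hfresh : ∀ i < n, ∀ v, (cl i).HasVar v →
      (∀ j ≤ i, ¬ AGoal.HasVar (raw j) v) ∧ sub i v = Trm.var v ∧
        ∀ u, ¬ Trm.HasVar v (sub i u)
  hstep : ∀ i < n, ∃ pre post, raw i = pre ++ ((selAtom i, selAnn i) :: post) ∧
      (selAtom i).subst (sub i) ∈ C ∧
      IsMGUA (mgu i) ((selAtom i).subst (sub i)) (cl i).head ∧
      raw (i + 1) = pre ++ annBody (cl i) (orig i) (selAnn i) ++ post
  hsubs : ∀ i < n, sub (i + 1) = (sub i).comp (mgu i)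

namespace Derivation

variable {P F : Type} {prog : Set (Clause P F)} {C : Set (Atom P F)} {g0 : AGoal P F} {n : ℕ}

/-- The `i`-th resolvent. -/
def resolvent (D : Derivation P F prog C g0 n) (i : ℕ) : AGoal P F :=
  AGoal.inst (D.sub i) (D.raw i)

/-- The atoms of the `i`-th resolvent. -/
def resAtoms (D : Derivation P F prog C g0 n) (i : ℕ) : List (Atom P F) :=
  (D.resolvent i).map Prod.fst

def rawAtoms (D : Derivation P F prog C g0 n) (i : ℕ) : List (Atom P F) :=
  (D.raw i).map Prod.fst

def Successful (D : Derivation P F prog C g0 n) : Prop := D.raw n = []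

/-- Floundered: the last resolvent is nonempty and none of its atoms is callable. -/
def Floundered (D : Derivation P F prog C g0 n) : Prop :=
  D.raw n ≠ [] ∧ ∀ a ∈ D.resolvent n, a.1 ∉ C

/-- The composed answer substitution of the derivation. -/
def answer (D : Derivation P F prog C g0 n) : Subst F := D.sub n

end Derivation

/-- Two derivations use the same clause selection: corresponding selected atoms
(equal annotations) are resolved with the same program clause. -/
def SameSelection {P F : Type} {prog prog' : Set (Clause P F)} {C C' : Set (Atom P F)}
    {g0 g0' : AGoal P F} {n n' : ℕ}
    (D : Derivation P F prog C g0 n) (D' : Derivation P F prog' C' g0' n') : Prop :=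
  ∀ i < n, ∀ i' < n', D.selAnn i = D'.selAnn i' → D.orig i = D'.orig i'

/-- The answer substitution is a renaming on the variables of goal `G`. -/
def RenamingOnGoal {P F : Type} (G : List (Atom P F)) (θ : Subst F) : Prop :=
  (∀ v, (∃ A ∈ G, A.HasVar v) → ∃ u, θ v = Trm.var u) ∧
  (∀ v w, (∃ A ∈ G, A.HasVar v) → (∃ A ∈ G, A.HasVar w) → v ≠ w → θ v ≠ θ w)

/-- Goal-level instance (one substitution applied throughout). -/
def GoalInst {P F : Type} (g h : List (Atom P F)) : Prop :=
  ∃ σ : Subst F, h = g.map (Atom.subst σ)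

/-- `m` is a most general common instance of `g₁` and `g₂`. -/
def MGIGoal {P F : Type} (g₁ g₂ m : List (Atom P F)) : Prop :=
  GoalInst g₁ m ∧ GoalInst g₂ m ∧
    ∀ m', GoalInst g₁ m' → GoalInst g₂ m' → GoalInst m m'

/-! ## Delay declarations -/

/-- Delay conditions over `n` argument positions, built from `var`, `nonground`,
conjunction and disjunction. -/
inductive DCond : ℕ → Type
  | var {n : ℕ} : Fin n → DCond n
  | nonground {n : ℕ} : Fin n → DCond n
  | conj {n : ℕ} : DCond n → DCond n → DCond n
  | disj {n : ℕ} : DCond n → DCond n → DCond n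

/-- Concrete (procedural) truth of a delay condition. -/
def DCond.holds {F : Type} {n : ℕ} (args : Fin n → Trm F) : DCond n → Prop
  | DCond.var i => ∃ v, args i = Trm.var v
  | DCond.nonground i => ¬ Trm.Ground (args i)
  | DCond.conj c d => DCond.holds args c ∧ DCond.holds args d
  | DCond.disj c d => DCond.holds args c ∨ DCond.holds args d

structure DelayDecl (P : Type) where
  pred : P
  arity : ℕ
  cond : DCond arity

/-- A program with delay declarations. -/
structure DProg (P F : Type) where
  prog : Set (Clause P F)
  delays : Set (DelayDecl P)

/-- An atom matches some delay declaration whose condition holds. -/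
def Delayed {P F : Type} (dp : DProg P F) (A : Atom P F) : Prop :=
  ∃ d ∈ dp.delays, d.pred = A.pred ∧ ∃ h : A.args.length = d.arity,
    DCond.holds (fun i => A.args.get (Fin.cast h.symm i)) d.cond

/-- The callable atom set induced by the delay declarations. -/
def Callable {P F : Type} (dp : DProg P F) : Set (Atom P F) := {A | ¬ Delayed dp A}

/-- A nonempty goal all of whose atoms are delayed. -/
def ImmFloundered {P F : Type} (dp : DProg P F) (G : List (Atom P F)) : Prop :=
  G ≠ [] ∧ ∀ A ∈ G, Delayed dp A

/-! ## The SF transformation -/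

/-- Predicates of `SF(P)`: the original predicates plus `evar/1` and `enonground/1`. -/
inductive SPred (P : Type) : Type
  | orig : P → SPred P
  | evar : SPred P
  | enonground : SPred P

def Atom.mapPred {P Q F : Type} (f : P → Q) (A : Atom P F) : Atom Q F := ⟨f A.pred, A.args⟩
def Clause.mapPred {P Q F : Type} (f : P → Q) (c : Clause P F) : Clause Q F :=
  ⟨c.head.mapPred f, c.body.map (Atom.mapPred f)⟩

/-- Disjunctive normal form of a delay condition: a list of conjunctions of
literals `(i, true)` (= var) and `(i, false)` (= nonground). -/
def DCond.dnf {n : ℕ} : DCond n → List (List (Fin n × Bool))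
  | DCond.var i => [[(i, true)]]
  | DCond.nonground i => [[(i, false)]]
  | DCond.conj c d => (DCond.dnf c).flatMap (fun a => (DCond.dnf d).map (fun b => a ++ b))
  | DCond.disj c d => DCond.dnf c ++ DCond.dnf d

/-- The delay clauses `A :- C'` added for the delay declarations (conditions
translated to `evar`/`enonground` calls, one clause per DNF disjunct). -/
def declClauses {P F : Type} (dp : DProg P F) : Set (Clause (SPred P) F) :=
  { c | ∃ d ∈ dp.delays, ∃ conj ∈ DCond.dnf d.cond,
      c = ⟨⟨SPred.orig d.pred, (List.range d.arity).map Trm.var⟩,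
           conj.map (fun p =>
             ⟨if p.2 then SPred.evar else SPred.enonground, [Trm.var (p.1 : ℕ)]⟩)⟩ }

/-- The infinite fact set defining `evar/1`. -/
def evarFacts (P : Type) {F : Type} (Fp : Set F) : Set (Clause (SPred P) F) :=
  { c | ∃ t : Trm F, t.Ground ∧ EVarT Fp t ∧ c = ⟨⟨SPred.evar, [t]⟩, []⟩ }

/-- The infinite fact set defining `enonground/1`. -/
def engFacts (P : Type) {F : Type} (Fp : Set F) : Set (Clause (SPred P) F) :=
  { c | ∃ t : Trm F, t.Ground ∧ ENongroundT Fp t ∧ c = ⟨⟨SPred.enonground, [t]⟩, []⟩ }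

/-- All delay clauses: those for the declarations plus the `evar`/`enonground` facts. -/
def delayClausesAll {P F : Type} (Fp : Set F) (dp : DProg P F) : Set (Clause (SPred P) F) :=
  declClauses dp ∪ evarFacts P Fp ∪ engFacts P Fp

/-- The transformed program `SF(P)`. -/
def SFprog {P F : Type} (Fp : Set F) (dp : DProg P F) : Set (Clause (SPred P) F) :=
  (Clause.mapPred SPred.orig '' dp.prog) ∪ delayClausesAll Fp dp

/-- The (ground) success set of a program: ground atoms with successful SLD
derivations. -/
def SS {P F : Type} (prog : Set (Clause P F)) : Set (Atom P F) :=
  { A | A.Ground ∧ ∃ n, ∃ D : Derivation P F prog Set.univ (initGoal [A]) n, D.Successful }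

/-- The non-ground flounder set: program atoms with floundered derivations whose
floundered computed answer substitution is a renaming (empty). -/
def NFS {P F : Type} (Fp : Set F) (prog : Set (Clause P F)) (C : Set (Atom P F)) :
    Set (Atom P F) :=
  { A | A.OnlyFuncs Fp ∧ ∃ n, ∃ D : Derivation P F prog C (initGoal [A]) n,
        D.Floundered ∧ RenamingOnGoal [A] (D.sub n) }

/-- `A` is a ground encoding of `B`: distinct variables of `B` are replaced by
distinct ground terms with extraneous principal function symbols. -/
def Encodes {P F : Type} (Fp : Set F) (B A : Atom P F) : Prop :=
  ∃ σ : Subst F, A = B.subst σ ∧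
    (∀ v, B.HasVar v → (σ v).Ground ∧ EVarT Fp (σ v)) ∧
    (∀ v w, B.HasVar v → B.HasVar w → v ≠ w → σ v ≠ σ w)

/-- The encoded flounder set. -/
def EFS {P F : Type} (Fp : Set F) (prog : Set (Clause P F)) (C : Set (Atom P F)) :
    Set (Atom P F) :=
  { A | ∃ B ∈ NFS Fp prog C, Encodes Fp B A }

/-- The computed answer binds each variable of `G` either to a variable or to a
ground term with extraneous principal function symbol, injectively. -/
def ExtrAnswer {P F : Type} (Fp : Set F) (G : List (Atom P F)) (θ : Subst F) : Prop :=
  (∀ v, (∃ A ∈ G, A.HasVar v) →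
      (∃ u, θ v = Trm.var u) ∨ ((θ v).Ground ∧ EVarT Fp (θ v))) ∧
  (∀ v w, (∃ A ∈ G, A.HasVar v) → (∃ A ∈ G, A.HasVar w) → v ≠ w → θ v ≠ θ w)

/-! ## Proof trees and the flagged immediate consequence operator -/

/-- `Proof prog A n`: the ground atom `A` has an SLD proof tree of height ≤ `n`. -/
inductive Proof {P F : Type} (prog : Set (Clause P F)) : Atom P F → ℕ → Prop
  | node {c : Clause P F} {γ : Subst F} {m : ℕ} :
      c ∈ prog → (Clause.subst γ c).Ground →
      (∀ B ∈ (Clause.subst γ c).body, Proof prog B m) →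
      Proof prog (Clause.subst γ c).head (m + 1)
  | succ {A : Atom P F} {m : ℕ} : Proof prog A m → Proof prog A (m + 1)

/-- `ProofD prog S A n`: proof tree of height ≤ `n` using at least one clause from `S`. -/
inductive ProofD {P F : Type} (prog S : Set (Clause P F)) : Atom P F → ℕ → Prop
  | here {c : Clause P F} {γ : Subst F} {m : ℕ} :
      c ∈ prog → c ∈ S → (Clause.subst γ c).Ground →
      (∀ B ∈ (Clause.subst γ c).body, Proof prog B m) →
      ProofD prog S (Clause.subst γ c).head (m + 1)
  | there {c : Clause P F} {γ : Subst F} {m : ℕ} {B : Atom P F} :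
      c ∈ prog → (Clause.subst γ c).Ground →
      (∀ B' ∈ (Clause.subst γ c).body, Proof prog B' m) →
      B ∈ (Clause.subst γ c).body → ProofD prog S B m →
      ProofD prog S (Clause.subst γ c).head (m + 1)
  | succ {A : Atom P F} {m : ℕ} : ProofD prog S A m → ProofD prog S A (m + 1)

/-- The standard immediate consequence operator. -/
def Tp {P F : Type} (prog : Set (Clause P F)) (I : Set (Atom P F)) : Set (Atom P F) :=
  { A | ∃ c ∈ prog, ∃ γ : Subst F, (Clause.subst γ c).Ground ∧
        (Clause.subst γ c).head = A ∧ ∀ B ∈ (Clause.subst γ c).body, B ∈ I }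

/-- f-interpretations: a set of ground atoms, some flagged. -/
structure FInterp (P F : Type) where
  atoms : Set (Atom P F)
  flagged : Set (Atom P F)

/-- The flagged immediate consequence operator `T^f_P`. -/
def Tf {P F : Type} (Fp : Set F) (dp : DProg P F) (I : FInterp (SPred P) F) :
    FInterp (SPred P) F where
  atoms := Tp (SFprog Fp dp) I.atoms
  flagged := { A | A ∈ Tp (SFprog Fp dp) I.atoms ∧
      (A.pred = SPred.evar ∨ A.pred = SPred.enonground ∨
       ∃ c ∈ SFprog Fp dp, ∃ γ : Subst F, (Clause.subst γ c).Ground ∧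
         (Clause.subst γ c).head = A ∧
         (∀ B ∈ (Clause.subst γ c).body, B ∈ I.atoms) ∧
         ∃ B ∈ (Clause.subst γ c).body, B ∈ I.flagged) }

/-- Iterates `T^f_P ↑ n`. -/
def TfIter {P F : Type} (Fp : Set F) (dp : DProg P F) : ℕ → FInterp (SPred P) F
  | 0 => ⟨∅, ∅⟩
  | m + 1 => Tf Fp dp (TfIter Fp dp m)

/-- `T^f_P ↑ ω`. -/
def TfOmega {P F : Type} (Fp : Set F) (dp : DProg P F) : FInterp (SPred P) F :=
  ⟨⋃ m, (TfIter Fp dp m).atoms, ⋃ m, (TfIter Fp dp m).flagged⟩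


/-- The Boolean abstraction of a term under a valuation of the variables:
`X = f(Y₁,...,Y_N)` with `f` a program function symbol is abstracted by
`X ↔ Y₁ ∧ ... ∧ Y_N`, so a program term's value is the conjunction of the values
of its variables. -/
def absTrm {F : Type} (v : ℕ → Prop) (t : Trm F) : Prop := ∀ x, t.HasVar x → v x

/-- Abstract truth of an atom: original predicates are interpreted by the Boolean
model `M`; calls `evar(X)`/`enonground(X)` are abstracted by `X ↔ False`. -/
def AbsHolds {P F : Type} (M : P → List Prop → Prop) (v : ℕ → Prop)
    (A : Atom (SPred P) F) : Prop :=
  match A.pred with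
  | SPred.orig q => M q (A.args.map (absTrm v))
  | SPred.evar => ∀ t ∈ A.args, ¬ absTrm v t
  | SPred.enonground => ∀ t ∈ A.args, ¬ absTrm v t

/-- `M` is a Boolean model of the abstracted program. -/
def IsAbsModel {P F : Type} (M : P → List Prop → Prop)
    (cls : Set (Clause (SPred P) F)) : Prop :=
  ∀ c ∈ cls, ∀ v : ℕ → Prop, (∀ B ∈ c.body, AbsHolds M v B) → AbsHolds M v c.head

/-! ### Auxiliary lemmas for the soundness proof -/

section Aux

variable {F : Type}

/-- Structural induction principle for `Trm` convenient for nested lists. -/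
theorem Trm.indOn {motive : Trm F → Prop}
    (hv : ∀ v, motive (.var v))
    (ha : ∀ f ts, (∀ t ∈ ts, motive t) → motive (.app f ts)) :
    ∀ t, motive t
  | .var v => hv v
  | .app f ts => ha f ts (fun t ht => Trm.indOn hv ha t)
  decreasing_by
    have := List.sizeOf_lt_of_mem ht
    simp only [Trm.app.sizeOf_spec] at *
    omega

@[simp] theorem Trm.subst_var (θ : Subst F) (v : ℕ) :
    Trm.subst θ (.var v) = θ v := by rw [Trm.subst]

@[simp] theorem Trm.subst_app (θ : Subst F) (f : F) (ts : List (Trm F)) :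
    Trm.subst θ (.app f ts) = .app f (ts.map (Trm.subst θ)) := by
  rw [Trm.subst]
  simp

theorem Trm.hasVar_var_iff {x v : ℕ} : Trm.HasVar x (Trm.var (F := F) v) ↔ x = v := by
  constructor
  · rintro ⟨⟩; rfl
  · rintro rfl; exact .var

theorem Trm.hasVar_app_iff {x : ℕ} {f : F} {ts : List (Trm F)} :
    Trm.HasVar x (.app f ts) ↔ ∃ t ∈ ts, Trm.HasVar x t := by
  constructor
  · rintro ⟨_, _⟩; exact ⟨_, ‹_›, ‹_›⟩
  · rintro ⟨t, ht, h⟩; exact .app ht h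

theorem Trm.hasFunc_app_iff {g : F} {f : F} {ts : List (Trm F)} :
    Trm.HasFunc g (.app f ts) ↔ g = f ∨ ∃ t ∈ ts, Trm.HasFunc g t := by
  constructor
  · rintro (_ | ⟨ht, h⟩)
    · exact Or.inl rfl
    · exact Or.inr ⟨_, ht, h⟩
  · rintro (rfl | ⟨t, ht, h⟩)
    · exact .head
    · exact .arg ht h

theorem Trm.hasVar_subst {θ : Subst F} {x : ℕ} :
    ∀ {t : Trm F}, ((t.subst θ).HasVar x ↔ ∃ v, t.HasVar v ∧ (θ v).HasVar x) := by
  intro t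
  induction t using Trm.indOn with
  | hv v => simp [Trm.hasVar_var_iff]
  | ha f ts ih =>
      simp only [Trm.subst_app, Trm.hasVar_app_iff, List.mem_map]
      constructor
      · rintro ⟨_, ⟨t, ht, rfl⟩, h⟩
        obtain ⟨v, hv, hv'⟩ := (ih t ht).1 h
        exact ⟨v, ⟨t, ht, hv⟩, hv'⟩
      · rintro ⟨v, ⟨t, ht, hv⟩, hv'⟩
        exact ⟨_, ⟨t, ht, rfl⟩, (ih t ht).2 ⟨v, hv, hv'⟩⟩

theorem Trm.hasFunc_subst {θ : Subst F} {g : F} :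
    ∀ {t : Trm F}, ((t.subst θ).HasFunc g ↔
      t.HasFunc g ∨ ∃ v, t.HasVar v ∧ (θ v).HasFunc g) := by
  intro t
  induction t using Trm.indOn with
  | hv v =>
      simp only [Trm.subst_var, Trm.hasVar_var_iff]
      constructor
      · intro h; exact Or.inr ⟨v, ⟨rfl, h⟩⟩
      · rintro (h | ⟨w, rfl, h⟩)
        · cases h
        · exact h
  | ha f ts ih =>
      simp only [Trm.subst_app, Trm.hasFunc_app_iff, List.mem_map, Trm.hasVar_app_iff]
      constructor
      · rintro (rfl | ⟨_, ⟨t, ht, rfl⟩, h⟩)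
        · exact Or.inl (Or.inl rfl)
        · rcases (ih t ht).1 h with h | ⟨v, hv, hv'⟩
          · exact Or.inl (Or.inr ⟨t, ht, h⟩)
          · exact Or.inr ⟨v, ⟨t, ht, hv⟩, hv'⟩
      · rintro ((rfl | ⟨t, ht, h⟩) | ⟨v, ⟨t, ht, hv⟩, hv'⟩)
        · exact Or.inl rfl
        · exact Or.inr ⟨_, ⟨t, ht, rfl⟩, (ih t ht).2 (Or.inl h)⟩
        · exact Or.inr ⟨_, ⟨t, ht, rfl⟩, (ih t ht).2 (Or.inr ⟨v, hv, hv'⟩)⟩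

theorem Trm.subst_subst (θ σ : Subst F) :
    ∀ t : Trm F, (t.subst θ).subst σ = t.subst (Subst.comp θ σ) := by
  intro t
  induction t using Trm.indOn with
  | hv v => simp [Subst.comp]
  | ha f ts ih =>
      simp only [Trm.subst_app, List.map_map]
      congr 1
      exact List.map_congr_left (fun t ht => ih t ht)

theorem Subst.comp_assoc (θ σ τ : Subst F) :
    Subst.comp (Subst.comp θ σ) τ = Subst.comp θ (Subst.comp σ τ) := by
  funext v
  exact Trm.subst_subst σ τ (θ v)

theorem Trm.subst_eq_self {θ : Subst F} :
    ∀ {t : Trm F}, (∀ v, t.HasVar v → θ v = Trm.var v) → t.subst θ = t := by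
  intro t
  induction t using Trm.indOn with
  | hv v => intro h; simp [h v .var]
  | ha f ts ih =>
      intro h
      simp only [Trm.subst_app]
      congr 1
      rw [List.map_congr_left (fun t ht => ih t ht
        (fun v hv => h v (.app ht hv)))]
      exact List.map_id _

theorem Trm.subst_id (t : Trm F) : t.subst Trm.var = t :=
  Trm.subst_eq_self (fun _ _ => rfl)

theorem Trm.subst_ground {θ : Subst F} {t : Trm F} (h : t.Ground) :
    t.subst θ = t :=
  Trm.subst_eq_self (fun v hv => absurd hv (h v))

theorem Trm.ground_subst {θ : Subst F} (hθ : ∀ v, (θ v).Ground) (t : Trm F) :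
    (t.subst θ).Ground := by
  intro x hx
  obtain ⟨v, _, hv'⟩ := Trm.hasVar_subst.1 hx
  exact hθ v x hv'

variable {P : Type}

theorem Atom.subst_subst (θ σ : Subst F) (A : Atom P F) :
    (A.subst θ).subst σ = A.subst (Subst.comp θ σ) := by
  simp only [Atom.subst, List.map_map]
  congr 1
  exact List.map_congr_left (fun t _ => Trm.subst_subst θ σ t)

theorem Atom.subst_eq_self {θ : Subst F} {A : Atom P F}
    (h : ∀ v, A.HasVar v → θ v = Trm.var v) : A.subst θ = A := by
  rcases A with ⟨p, args⟩
  simp only [Atom.subst, mk.injEq, true_and]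
  rw [List.map_congr_left (fun t ht => Trm.subst_eq_self
    (fun v hv => h v ⟨t, ht, hv⟩))]
  exact List.map_id _

theorem Atom.subst_ground {θ : Subst F} {A : Atom P F} (h : A.Ground) :
    A.subst θ = A :=
  Atom.subst_eq_self (fun v hv => absurd ⟨_, hv.choose_spec.1, hv.choose_spec.2⟩ (h v))

theorem Atom.ground_subst {θ : Subst F} (hθ : ∀ v, (θ v).Ground) (A : Atom P F) :
    (A.subst θ).Ground := by
  rintro x ⟨t, ht, hv⟩
  obtain ⟨t0, ht0, rfl⟩ := List.mem_map.1 ht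
  exact (Trm.ground_subst hθ t0) x hv

theorem Clause.subst_subst (θ σ : Subst F) (c : Clause P F) :
    (c.subst θ).subst σ = c.subst (Subst.comp θ σ) := by
  simp only [Clause.subst, Clause.mk.injEq, List.map_map]
  exact ⟨Atom.subst_subst θ σ c.head,
    List.map_congr_left (fun B _ => Atom.subst_subst θ σ B)⟩

theorem Subst.comp_id_right (θ : Subst F) : Subst.comp θ Trm.var = θ := by
  funext v; exact Trm.subst_id (θ v)

theorem mem_annBody {c c₀ : Clause P F} {ann : Ann P F} {B : Atom P F}
    (hB : B ∈ c.body) : ∃ ann', (B, ann') ∈ annBody c c₀ ann := by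
  obtain ⟨⟨j, hj⟩, hget⟩ := List.mem_iff_get.1 hB
  refine ⟨(some c₀, j + 1) :: ann, List.mem_map.2 ⟨(j, B), ?_, rfl⟩⟩
  rw [List.mem_map]
  refine ⟨(B, j), ?_, rfl⟩
  rw [List.mem_zipIdx_iff_getElem?]
  simp only [List.getElem?_eq_getElem hj]
  rw [← hget]
  rfl

/-- The soundness of SLD derivations: every ground instance of every atom in
the initial goal, instantiated by the answer, belongs to any `Tp`-closed set,
provided a ground term exists to ground away auxiliary variables. -/
theorem derivation_sound {prog : Set (Clause P F)} {g0 : AGoal P F} {n : ℕ}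
    (gtrm : Trm F) (hgt : gtrm.Ground)
    (I : Set (Atom P F))
    (hI : ∀ c ∈ prog, ∀ γ : Subst F, (Clause.subst γ c).Ground →
      (∀ B ∈ (Clause.subst γ c).body, B ∈ I) → (Clause.subst γ c).head ∈ I)
    (D : Derivation P F prog Set.univ g0 n) (hs : D.Successful) :
    ∀ k i, i + k = n →
      (∃ τ, D.sub n = Subst.comp (D.sub i) τ) ∧
      ∀ a ∈ D.raw i, ∀ σ : Subst F, ((a.1.subst (D.sub n)).subst σ).Ground →
        (a.1.subst (D.sub n)).subst σ ∈ I := by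
  intro k
  induction k with
  | zero =>
      intro i hi
      have : i = n := by omega
      subst this
      refine ⟨⟨Trm.var, (Subst.comp_id_right _).symm⟩, ?_⟩
      intro a ha
      rw [hs] at ha
      cases ha
  | succ k ih =>
      intro i hi
      have hin : i < n := by omega
      obtain ⟨⟨τ', hτ'⟩, hprop⟩ := ih (i + 1) (by omega)
      obtain ⟨pre, post, hrawi, -, ⟨hunif, -⟩, hrawsucc⟩ := D.hstep i hin
      have hsubn : D.sub n = Subst.comp (D.sub i) (Subst.comp (D.mgu i) τ') := by
        rw [hτ', D.hsubs i hin, Subst.comp_assoc]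
      refine ⟨⟨_, hsubn⟩, ?_⟩
      intro a ha σ hground
      rw [hrawi] at ha
      rcases List.mem_append.1 ha with hpre | hsel
      · have : a ∈ D.raw (i + 1) := by
          rw [hrawsucc]
          exact List.mem_append.2 (Or.inl (List.mem_append.2 (Or.inl hpre)))
        exact hprop a this σ hground
      rcases List.mem_cons.1 hsel with rfl | hpost
      swap
      · have : a ∈ D.raw (i + 1) := by
          rw [hrawsucc]
          exact List.mem_append.2 (Or.inr hpost)
        exact hprop a this σ hground
      -- selected atom case
      obtain ⟨ρ, -, hcl⟩ := D.hvariant i hin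
      have horig := D.horig i hin
      -- the head instance
      set δ : Subst F := Subst.comp (D.mgu i) (Subst.comp τ' σ) with hδ
      have hself : (D.selAtom i).subst (D.sub n) = (D.cl i).head.subst
          (Subst.comp (D.mgu i) τ') := by
        rw [hsubn, ← Atom.subst_subst, ← Atom.subst_subst, hunif, Atom.subst_subst]
      have hheadeq : ((D.selAtom i).subst (D.sub n)).subst σ = (D.cl i).head.subst δ := by
        rw [hself, Atom.subst_subst, hδ, Subst.comp_assoc]
      set g : Subst F := fun _ => gtrm with hg
      have hgG : ∀ v, (g v).Ground := fun _ => hgt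
      set γ : Subst F := Subst.comp δ g with hγ
      have hheadγ : (D.cl i).head.subst γ = ((D.selAtom i).subst (D.sub n)).subst σ := by
        rw [hγ, ← Atom.subst_subst, ← hheadeq]
        exact Atom.subst_ground (by rwa [hheadeq, ← hheadeq] at hground)
      -- the body atoms, instantiated by γ, are ground and in I
      have hbody : ∀ B ∈ (D.cl i).body, (B.subst γ).Ground ∧ B.subst γ ∈ I := by
        intro B hB
        have hBfresh : B.subst (D.sub i) = B := by
          refine Atom.subst_eq_self (fun v hv => ?_)
          exact (D.hfresh i hin v (Or.inr ⟨B, hB, hv⟩)).2.1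
        have hBn : B.subst (D.sub n) = B.subst (Subst.comp (D.mgu i) τ') := by
          rw [hsubn, ← Atom.subst_subst, hBfresh]
        have hBγ : (B.subst (D.sub n)).subst (Subst.comp σ g) = B.subst γ := by
          rw [hBn, Atom.subst_subst, hγ, hδ, Subst.comp_assoc, Subst.comp_assoc,
            Subst.comp_assoc]
        have hBg : (B.subst γ).Ground := by
          rw [hγ, ← Atom.subst_subst]
          exact Atom.ground_subst hgG _
        refine ⟨hBg, ?_⟩
        obtain ⟨ann', hmem⟩ := mem_annBody (c₀ := D.orig i) (ann := D.selAnn i) hB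
        have hmem' : (B, ann') ∈ D.raw (i + 1) := by
          rw [hrawsucc]
          exact List.mem_append.2 (Or.inl (List.mem_append.2 (Or.inr hmem)))
        have := hprop (B, ann') hmem' (Subst.comp σ g) (by rwa [hBγ])
        rwa [hBγ] at this
      -- apply closure with the original clause
      have hclγ : Clause.subst γ (D.cl i) = Clause.subst (Subst.comp ρ γ) (D.orig i) := by
        rw [hcl, Clause.subst_subst]
      have hGc : (Clause.subst (Subst.comp ρ γ) (D.orig i)).Ground := by
        rw [← hclγ]
        constructor
        · show ((D.cl i).head.subst γ).Ground
          rw [hheadγ]; exact hground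
        · intro B hB
          obtain ⟨B0, hB0, rfl⟩ := List.mem_map.1 hB
          exact (hbody B0 hB0).1
      have hBI : ∀ B ∈ (Clause.subst (Subst.comp ρ γ) (D.orig i)).body, B ∈ I := by
        rw [← hclγ]
        intro B hB
        obtain ⟨B0, hB0, rfl⟩ := List.mem_map.1 hB
        exact (hbody B0 hB0).2
      have := hI (D.orig i) horig (Subst.comp ρ γ) hGc hBI
      rw [← hclγ] at this
      show ((D.selAtom i).subst (D.sub n)).subst σ ∈ I
      rwa [← hheadγ]

/-- Any ground atom in the success set belongs to any `Tp`-closed set. -/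
theorem ss_subset {prog : Set (Clause P F)} (gtrm : Trm F) (hgt : gtrm.Ground)
    (I : Set (Atom P F))
    (hI : ∀ c ∈ prog, ∀ γ : Subst F, (Clause.subst γ c).Ground →
      (∀ B ∈ (Clause.subst γ c).body, B ∈ I) → (Clause.subst γ c).head ∈ I) :
    ∀ A ∈ SS prog, A ∈ I := by
  rintro A ⟨hAg, n, D, hs⟩
  obtain ⟨-, hprop⟩ := derivation_sound gtrm hgt I hI D hs n 0 (by omega)
  have hmem : (A, [((none : Option (Clause P F)), 1)]) ∈ D.raw 0 := by
    rw [D.hraw0]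
    simp [initGoal]
  have h1 : (A.subst (D.sub n)).subst Trm.var = A := by
    rw [Atom.subst_ground hAg, Atom.subst_ground hAg]
  have := hprop _ hmem Trm.var (by rwa [h1])
  rwa [h1] at this
  
end Aux

section AbsModel

variable {P F : Type}

/-- The groundness interpretation induced by the Boolean model `M`. -/
def Interp (Fp : Set F) (M : P → List Prop → Prop) : Set (Atom (SPred P) F) :=
  { A | match A.pred with
        | SPred.orig q => M q (A.args.map (Trm.OnlyFuncs Fp))
        | _ => ∀ t ∈ A.args, ¬ t.OnlyFuncs Fp }

theorem absTrm_iff (Fp : Set F) (γ : Subst F) {t : Trm F} (ht : t.OnlyFuncs Fp) :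
    absTrm (fun x => (γ x).OnlyFuncs Fp) t ↔ (t.subst γ).OnlyFuncs Fp := by
  constructor
  · intro h f hf
    rcases Trm.hasFunc_subst.1 hf with h1 | ⟨v, hv, hf'⟩
    · exact ht f h1
    · exact h v hv f hf'
  · intro h x hx f hf
    exact h f (Trm.hasFunc_subst.2 (Or.inr ⟨x, hx, hf⟩))

theorem absHolds_iff (Fp : Set F) (M : P → List Prop → Prop) (γ : Subst F)
    {A : Atom (SPred P) F} (hA : A.OnlyFuncs Fp) :
    AbsHolds M (fun x => (γ x).OnlyFuncs Fp) A ↔ A.subst γ ∈ Interp Fp M := by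
  rcases A with ⟨p, args⟩
  have hmaps : args.map (fun t => absTrm (fun x => (γ x).OnlyFuncs Fp) t)
      = args.map (fun t => (t.subst γ).OnlyFuncs Fp) :=
    List.map_congr_left (fun t ht => propext (absTrm_iff Fp γ (hA t ht)))
  cases p with
  | orig q =>
      show M q _ ↔ M q _
      rw [show (Atom.subst γ ⟨SPred.orig q, args⟩).args = args.map (Trm.subst γ) from rfl,
        List.map_map]
      rw [hmaps]
      rfl
  | evar =>
      show (∀ t ∈ args, ¬ absTrm _ t) ↔ ∀ t ∈ args.map (Trm.subst γ), ¬ t.OnlyFuncs Fp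
      simp only [List.mem_map, forall_exists_index, and_imp]
      constructor
      · rintro h t t0 ht0 rfl
        exact fun hc => h t0 ht0 ((absTrm_iff Fp γ (hA t0 ht0)).2 hc)
      · intro h t ht hc
        exact h _ t ht rfl ((absTrm_iff Fp γ (hA t ht)).1 hc)
  | enonground =>
      show (∀ t ∈ args, ¬ absTrm _ t) ↔ ∀ t ∈ args.map (Trm.subst γ), ¬ t.OnlyFuncs Fp
      simp only [List.mem_map, forall_exists_index, and_imp]
      constructor
      · rintro h t t0 ht0 rfl
        exact fun hc => h t0 ht0 ((absTrm_iff Fp γ (hA t0 ht0)).2 hc)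
      · intro h t ht hc
        exact h _ t ht rfl ((absTrm_iff Fp γ (hA t ht)).1 hc)

end AbsModel

/-- soundness of the Pos-style groundness abstraction: if the Boolean
model forces an argument position to True, then in every atom of the concrete success
set (with evar/enonground given by their fact sets) the corresponding argument
contains only program function symbols. -/
theorem pos_abstraction_sound {P F : Type} (Fp : Set F)
    (cls : Set (Clause (SPred P) F))
    (hcls : ∀ c ∈ cls, c.OnlyFuncs Fp ∧ ∃ q : P, c.head.pred = SPred.orig q)
    (M : P → List Prop → Prop) (hM : IsAbsModel M cls) :
    ∀ A ∈ SS (cls ∪ evarFacts P Fp ∪ engFacts P Fp), ∀ q : P,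
      A.pred = SPred.orig q ->
      ∀ i (h : i < A.args.length),
        (∀ bs : List Prop, ∀ hb : bs.length = A.args.length, M q bs ->
           bs.get ⟨i, by omega⟩) ->
        (A.args.get ⟨i, h⟩).OnlyFuncs Fp := by
  intro A hA q hq i h hforce
  have hAg : A.Ground := hA.1
  have hargG : ∀ t ∈ A.args, t.Ground := by
    intro t ht v hv
    exact hAg v ⟨t, ht, hv⟩
  by_cases hgex : ∃ t : Trm F, t.Ground
  swap
  · exact absurd ⟨A.args.get ⟨i, h⟩, hargG _ (A.args.get_mem ⟨i, h⟩)⟩ hgex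
  obtain ⟨gtrm, hgt⟩ := hgex
  -- the induced interpretation is closed under ground clause instances
  have hI : ∀ c ∈ cls ∪ evarFacts P Fp ∪ engFacts P Fp, ∀ γ : Subst F,
      (Clause.subst γ c).Ground →
      (∀ B ∈ (Clause.subst γ c).body, B ∈ Interp Fp M) →
      (Clause.subst γ c).head ∈ Interp Fp M := by
    rintro c hc γ hcg hbody
    rcases hc with (hc | hc) | hc
    · -- a program clause
      obtain ⟨honly, q', hq'⟩ := hcls c hc
      have hv : AbsHolds M (fun x => (γ x).OnlyFuncs Fp) c.head := by
        refine hM c hc _ (fun B hB => ?_)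
        rw [absHolds_iff Fp M γ (honly.2 B hB)]
        exact hbody _ (List.mem_map.2 ⟨B, hB, rfl⟩)
      rwa [absHolds_iff Fp M γ honly.1] at hv
    · -- an evar fact
      obtain ⟨t, htg, hev, rfl⟩ := hc
      simp only [Interp, Clause.subst, Atom.subst, Set.mem_setOf_eq, List.map_cons,
        List.map_nil, List.mem_cons, List.not_mem_nil, or_false, forall_eq]
      rw [Trm.subst_ground htg]
      cases t with
      | var v => exact absurd hev (by simp [EVarT])
      | app f ts =>
          intro hc'
          exact hev (hc' f Trm.HasFunc.head)
    · -- an enonground fact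
      obtain ⟨t, htg, ⟨f, hf, hfp⟩, rfl⟩ := hc
      simp only [Interp, Clause.subst, Atom.subst, Set.mem_setOf_eq, List.map_cons,
        List.map_nil, List.mem_cons, List.not_mem_nil, or_false, forall_eq]
      rw [Trm.subst_ground htg]
      intro hc'
      exact hfp (hc' f hf)
  have hAI := ss_subset gtrm hgt (Interp Fp M) hI A hA
  rcases A with ⟨p, args⟩
  cases hq
  simp only [Interp, Set.mem_setOf_eq] at hAI
  have := hforce (args.map (Trm.OnlyFuncs Fp)) (by simp) hAI
  simpa using this

end Flounder
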